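/- Let H = S(U(2)×U(1)) ⊂ SU(3) be the stabiliser of the decomposition ℂ³ = ℂ² ⊕ ℂ (block diagonal elements diag(A, det(A)^{-1}) with A ∈ U(2)). Let W_θ = T_θ(ℝ³) with T_θ as above, and let H_θ = T_θ^{-1} H T_θ ∩ SO(3) be the stabiliser of ℝ³ ⊂ ℂ³ corresponding to W_θ. Then: for θ ∈ (0, π/4), H_θ ≅ ℤ/2, generated by diag(1,−1,−1); for θ = 0, H_θ ≅ SO(2); for θ = π/4, H_θ ≅ O(2). -/

import Mathlib

open Complex Matrix

/-- The matrix `T_θ ∈ SU(3)`. -/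
noncomputable def Tmat (θ : ℝ) : Matrix (Fin 3) (Fin 3) ℂ :=
  !![1, 0, 0;
     0, -I * exp (-(θ : ℂ) * I) / (Real.sqrt 2 : ℂ), exp ((θ : ℂ) * I) / (Real.sqrt 2 : ℂ);
     0, -exp (-(θ : ℂ) * I) / (Real.sqrt 2 : ℂ), I * exp ((θ : ℂ) * I) / (Real.sqrt 2 : ℂ)]

/-- Membership in `H = S(U(2)×U(1)) ⊂ SU(3)`: special unitary and block diagonal with
respect to `ℂ² ⊕ ℂ`. -/
def InH (M : Matrix (Fin 3) (Fin 3) ℂ) : Prop :=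
  M ∈ Matrix.specialUnitaryGroup (Fin 3) ℂ ∧
    M 0 2 = 0 ∧ M 1 2 = 0 ∧ M 2 0 = 0 ∧ M 2 1 = 0

/-- `g` is a real special orthogonal 3×3 matrix. -/
def IsSO3 (g : Matrix (Fin 3) (Fin 3) ℝ) : Prop := g * gᵀ = 1 ∧ g.det = 1

/-- Membership in the stabiliser `H_θ = T_θ⁻¹ H T_θ ∩ SO(3)`. -/
noncomputable def InHtheta (θ : ℝ) (g : Matrix (Fin 3) (Fin 3) ℝ) : Prop :=
  IsSO3 g ∧ InH (Tmat θ * g.map (Complex.ofReal) * (Tmat θ)⁻¹)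

/- ### Auxiliary material -/

noncomputable def Umat (θ : ℝ) : Matrix (Fin 3) (Fin 3) ℂ :=
  !![1, 0, 0;
     0, I * exp ((θ : ℂ) * I) / (Real.sqrt 2 : ℂ), -exp ((θ : ℂ) * I) / (Real.sqrt 2 : ℂ);
     0, exp (-(θ : ℂ) * I) / (Real.sqrt 2 : ℂ), -I * exp (-(θ : ℂ) * I) / (Real.sqrt 2 : ℂ)]

lemma exp_mul_exp_neg (θ : ℝ) : exp ((θ:ℂ)*I) * exp (-((θ:ℂ) * I)) = 1 := by
  rw [← Complex.exp_add]; ring_nf; exact Complex.exp_zero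

lemma exp_mul_exp_neg' (θ : ℝ) : exp (I*(θ:ℂ)) * exp (-(I*(θ:ℂ))) = 1 := by
  rw [← Complex.exp_add]; ring_nf; exact Complex.exp_zero

lemma sqrt2_inv_sq : (((Real.sqrt 2 : ℝ) : ℂ))⁻¹^2 = (2:ℂ)⁻¹ := by
  rw [inv_pow]; norm_cast; rw [Real.sq_sqrt] <;> norm_num

lemma sqrt2_ne : ((Real.sqrt 2 : ℝ) : ℂ) ≠ 0 := by
  simp [Real.sqrt_eq_zero']

lemma T_mul_U (θ : ℝ) : Tmat θ * Umat θ = 1 := by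
  have h := exp_mul_exp_neg θ
  have h' := exp_mul_exp_neg' θ
  have hv := sqrt2_inv_sq
  have hI := Complex.I_sq
  ext i j
  fin_cases i <;> fin_cases j <;>
    simp [Tmat, Umat, Matrix.mul_apply, Fin.sum_univ_three, Matrix.one_apply, neg_mul, Matrix.vecHead, Matrix.vecTail] <;>
    first
      | ring1
      | (linear_combination ((1-I^2)*(((Real.sqrt 2:ℝ):ℂ))⁻¹ ^ 2)*h - ((((Real.sqrt 2:ℝ):ℂ))⁻¹ ^ 2)*hI + 2*hv)
      | (linear_combination ((1-I^2)*(((Real.sqrt 2:ℝ):ℂ))⁻¹ ^ 2)*h' - ((((Real.sqrt 2:ℝ):ℂ))⁻¹ ^ 2)*hI + 2*hv)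

lemma U_mul_T (θ : ℝ) : Umat θ * Tmat θ = 1 := by
  have h := exp_mul_exp_neg θ
  have h' := exp_mul_exp_neg' θ
  have hv := sqrt2_inv_sq
  have hI := Complex.I_sq
  ext i j
  fin_cases i <;> fin_cases j <;>
    simp [Tmat, Umat, Matrix.mul_apply, Fin.sum_univ_three, Matrix.one_apply, neg_mul, Matrix.vecHead, Matrix.vecTail] <;>
    first
      | ring1
      | (linear_combination ((1-I^2)*(((Real.sqrt 2:ℝ):ℂ))⁻¹ ^ 2)*h - ((((Real.sqrt 2:ℝ):ℂ))⁻¹ ^ 2)*hI + 2*hv)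
      | (linear_combination ((1-I^2)*(((Real.sqrt 2:ℝ):ℂ))⁻¹ ^ 2)*h' - ((((Real.sqrt 2:ℝ):ℂ))⁻¹ ^ 2)*hI + 2*hv)

lemma Tinv_eq (θ : ℝ) : (Tmat θ)⁻¹ = Umat θ :=
  Matrix.inv_eq_right_inv (T_mul_U θ)

lemma starT (θ : ℝ) : star (Tmat θ) = Umat θ := by
  ext i j
  fin_cases i <;> fin_cases j <;>
    simp [Tmat, Umat, Matrix.star_apply, Matrix.vecHead, Matrix.vecTail, ← Complex.exp_conj, Complex.conj_I, Complex.conj_ofReal]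

lemma starU (θ : ℝ) : star (Umat θ) = Tmat θ := by
  rw [← starT θ, star_star]

lemma star_map (g : Matrix (Fin 3) (Fin 3) ℝ) :
    star (g.map Complex.ofReal) = gᵀ.map Complex.ofReal := by
  ext i j
  simp [Matrix.conjTranspose_apply, Complex.conj_ofReal, Matrix.map_apply]

lemma map_mul_map (g h : Matrix (Fin 3) (Fin 3) ℝ) :
    g.map Complex.ofReal * h.map Complex.ofReal = (g * h).map Complex.ofReal := by
  ext i j
  simp [Matrix.mul_apply, Fin.sum_univ_three, Matrix.map_apply]

lemma su3 (θ : ℝ) (g : Matrix (Fin 3) (Fin 3) ℝ) (hg : IsSO3 g) :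
    Tmat θ * g.map Complex.ofReal * Umat θ ∈ Matrix.specialUnitaryGroup (Fin 3) ℂ := by
  rw [Matrix.mem_specialUnitaryGroup_iff]
  constructor
  · rw [Matrix.mem_unitaryGroup_iff]
    have hstar : star (Tmat θ * g.map Complex.ofReal * Umat θ)
        = Tmat θ * gᵀ.map Complex.ofReal * Umat θ := by
      rw [Matrix.star_mul, Matrix.star_mul, starU, starT, star_map, Matrix.mul_assoc]
    rw [hstar]
    have : Tmat θ * g.map Complex.ofReal * Umat θ * (Tmat θ * gᵀ.map Complex.ofReal * Umat θ)
        = Tmat θ * (g.map Complex.ofReal * ((Umat θ * Tmat θ) * (gᵀ.map Complex.ofReal))) * Umat θ := by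
      simp only [Matrix.mul_assoc]
    rw [this, U_mul_T, Matrix.one_mul, map_mul_map, hg.1]
    simp [T_mul_U]
  · rw [Matrix.det_mul, Matrix.det_mul]
    have hdet : (g.map Complex.ofReal).det = ((g.det : ℝ) : ℂ) := by
      have h := (RingHom.map_det Complex.ofRealHom g).symm
      simp only [RingHom.mapMatrix_apply] at h
      exact h
    rw [hdet, hg.2]
    have : (Tmat θ).det * (Umat θ).det = 1 := by
      rw [← Matrix.det_mul, T_mul_U, Matrix.det_one]
    push_cast
    linear_combination this

lemma en1 (z : ℂ) : exp (-z * I) = Complex.cos z - Complex.sin z * I := by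
  rw [show -z * I = -z * I from rfl, Complex.exp_mul_I, Complex.cos_neg, Complex.sin_neg]; ring
lemma en2 (z : ℂ) : exp (-(z * I)) = Complex.cos z - Complex.sin z * I := by
  rw [← neg_mul, en1]
lemma en3 (z : ℂ) : exp (-(I * z)) = Complex.cos z - Complex.sin z * I := by
  rw [show -(I*z) = -z * I by ring, en1]
lemma ep1 (z : ℂ) : exp (I * z) = Complex.cos z + Complex.sin z * I := by
  rw [mul_comm, Complex.exp_mul_I]

section entries
variable (θ : ℝ) (g : Matrix (Fin 3) (Fin 3) ℝ)

lemma e02 :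
    (Tmat θ * g.map Complex.ofReal * Umat θ) 0 2 =
      (((-(g 0 1 * Real.cos θ + g 0 2 * Real.sin θ)) : ℝ) : ℂ) / (Real.sqrt 2 : ℂ)
        + (((-(g 0 1 * Real.sin θ + g 0 2 * Real.cos θ)) : ℝ) : ℂ) * I / (Real.sqrt 2 : ℂ) := by
  have hI := Complex.I_sq
  simp [Tmat, Umat, Matrix.mul_apply, Fin.sum_univ_three, Matrix.map_apply,
    Matrix.vecMul, dotProduct, Matrix.vecHead, Matrix.vecTail,
    Complex.exp_mul_I, en1, en2, en3, ep1]
  linear_combination (((g 0 2 : ℝ):ℂ) * Complex.sin (θ:ℂ) * (((Real.sqrt 2:ℝ):ℂ))⁻¹) * hI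

lemma e20 :
    (Tmat θ * g.map Complex.ofReal * Umat θ) 2 0 =
      (((-(g 1 0 * Real.cos θ + g 2 0 * Real.sin θ)) : ℝ) : ℂ) / (Real.sqrt 2 : ℂ)
        + (((g 1 0 * Real.sin θ + g 2 0 * Real.cos θ) : ℝ) : ℂ) * I / (Real.sqrt 2 : ℂ) := by
  have hI := Complex.I_sq
  simp [Tmat, Umat, Matrix.mul_apply, Fin.sum_univ_three, Matrix.map_apply,
    Matrix.vecMul, dotProduct, Matrix.vecHead, Matrix.vecTail,
    Complex.exp_mul_I, en1, en2, en3, ep1]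
  linear_combination (((g 2 0 : ℝ):ℂ) * Complex.sin (θ:ℂ) * (((Real.sqrt 2:ℝ):ℂ))⁻¹) * hI

lemma e12 :
    (Tmat θ * g.map Complex.ofReal * Umat θ) 1 2 =
      (((-((g 1 2 + g 2 1) * (Real.cos θ^2 - Real.sin θ^2))) : ℝ) : ℂ) / ((Real.sqrt 2 : ℂ) * (Real.sqrt 2 : ℂ))
        + ((((g 1 1 - g 2 2) - (g 2 1 - g 1 2) * (2 * Real.sin θ * Real.cos θ)) : ℝ) : ℂ) * I / ((Real.sqrt 2 : ℂ) * (Real.sqrt 2 : ℂ)) := by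
  have hI := Complex.I_sq
  have hT := Complex.sin_sq_add_cos_sq (θ:ℂ)
  set c := Complex.cos (θ:ℂ)
  set s := Complex.sin (θ:ℂ)
  set u := (((Real.sqrt 2:ℝ):ℂ))⁻¹
  simp [Tmat, Umat, Matrix.mul_apply, Fin.sum_univ_three, Matrix.map_apply,
    Matrix.vecMul, dotProduct, Matrix.vecHead, Matrix.vecTail,
    Complex.exp_mul_I, en1, en2, en3, ep1]
  linear_combination (u^2*(((g 1 2:ℝ):ℂ) * s^2 * I^2 + (-(((g 1 1:ℝ):ℂ) - ((g 2 2:ℝ):ℂ))*s^2 - 2*c*s*((g 1 2:ℝ):ℂ)) * I + (((g 1 2:ℝ):ℂ)*c^2 - ((g 2 1:ℝ):ℂ)*s^2 - ((g 1 2:ℝ):ℂ)*s^2))) * hI + (u^2*(((g 1 1:ℝ):ℂ) - ((g 2 2:ℝ):ℂ))*I) * hT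

lemma e21 :
    (Tmat θ * g.map Complex.ofReal * Umat θ) 2 1 =
      (((-((g 1 2 + g 2 1) * (Real.cos θ^2 - Real.sin θ^2))) : ℝ) : ℂ) / ((Real.sqrt 2 : ℂ) * (Real.sqrt 2 : ℂ))
        + ((((g 2 2 - g 1 1) - (g 2 1 - g 1 2) * (2 * Real.sin θ * Real.cos θ)) : ℝ) : ℂ) * I / ((Real.sqrt 2 : ℂ) * (Real.sqrt 2 : ℂ)) := by
  have hI := Complex.I_sq
  have hT := Complex.sin_sq_add_cos_sq (θ:ℂ)
  set c := Complex.cos (θ:ℂ)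
  set s := Complex.sin (θ:ℂ)
  set u := (((Real.sqrt 2:ℝ):ℂ))⁻¹
  simp [Tmat, Umat, Matrix.mul_apply, Fin.sum_univ_three, Matrix.map_apply,
    Matrix.vecMul, dotProduct, Matrix.vecHead, Matrix.vecTail,
    Complex.exp_mul_I, en1, en2, en3, ep1]
  linear_combination (u^2*(((g 2 1:ℝ):ℂ) * s^2 * I^2 + ((((g 1 1:ℝ):ℂ) - ((g 2 2:ℝ):ℂ))*s^2 + 2*c*s*((g 2 1:ℝ):ℂ)) * I + (-((g 1 2:ℝ):ℂ)*s^2 + ((g 2 1:ℝ):ℂ)*c^2 - ((g 2 1:ℝ):ℂ)*s^2))) * hI + (u^2*(((g 2 2:ℝ):ℂ) - ((g 1 1:ℝ):ℂ))*I) * hT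

end entries

lemma cast_add_mul_I_eq_zero (a b : ℝ) : ((a:ℂ) + (b:ℂ)*I = 0) ↔ a = 0 ∧ b = 0 := by
  constructor
  · intro h
    have h1 := congrArg Complex.re h
    have h2 := congrArg Complex.im h
    simp at h1 h2
    exact ⟨h1, h2⟩
  · rintro ⟨rfl, rfl⟩; simp

lemma frac_zero (a b : ℝ) (w : ℂ) (hw : w ≠ 0) :
    ((a:ℂ)/w + (b:ℂ)*I/w = 0) ↔ a = 0 ∧ b = 0 := by
  rw [← add_div, div_eq_zero_iff, or_iff_left hw, cast_add_mul_I_eq_zero]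

/-- The master reduction: membership in `H_θ` in terms of real equations. -/
lemma key (θ : ℝ) (g : Matrix (Fin 3) (Fin 3) ℝ) :
    InHtheta θ g ↔ IsSO3 g ∧
      (g 0 1 * Real.cos θ + g 0 2 * Real.sin θ = 0 ∧
       g 0 1 * Real.sin θ + g 0 2 * Real.cos θ = 0 ∧
       g 1 0 * Real.cos θ + g 2 0 * Real.sin θ = 0 ∧
       g 1 0 * Real.sin θ + g 2 0 * Real.cos θ = 0 ∧
       (g 1 2 + g 2 1) * (Real.cos θ^2 - Real.sin θ^2) = 0 ∧
       (g 1 1 - g 2 2) - (g 2 1 - g 1 2) * (2 * Real.sin θ * Real.cos θ) = 0 ∧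
       (g 2 2 - g 1 1) - (g 2 1 - g 1 2) * (2 * Real.sin θ * Real.cos θ) = 0) := by
  have hw2 : (Real.sqrt 2 : ℂ) * (Real.sqrt 2 : ℂ) ≠ 0 := mul_ne_zero sqrt2_ne sqrt2_ne
  unfold InHtheta InH
  rw [Tinv_eq]
  constructor
  · rintro ⟨hg, -, h02, h12, h20, h21⟩
    rw [e02, frac_zero _ _ _ sqrt2_ne] at h02
    rw [e12, frac_zero _ _ _ hw2] at h12
    rw [e20, frac_zero _ _ _ sqrt2_ne] at h20
    rw [e21, frac_zero _ _ _ hw2] at h21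
    exact ⟨hg, neg_eq_zero.mp h02.1, neg_eq_zero.mp h02.2, neg_eq_zero.mp h20.1, h20.2,
      neg_eq_zero.mp h12.1, h12.2, h21.2⟩
  · rintro ⟨hg, c1, c2, c3, c4, c5, c6, c7⟩
    refine ⟨hg, su3 θ g hg, ?_, ?_, ?_, ?_⟩
    · rw [e02, frac_zero _ _ _ sqrt2_ne]
      exact ⟨neg_eq_zero.mpr c1, neg_eq_zero.mpr c2⟩
    · rw [e12, frac_zero _ _ _ hw2]
      exact ⟨neg_eq_zero.mpr c5, c6⟩
    · rw [e20, frac_zero _ _ _ sqrt2_ne]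
      exact ⟨neg_eq_zero.mpr c3, c4⟩
    · rw [e21, frac_zero _ _ _ hw2]
      exact ⟨neg_eq_zero.mpr c5, c7⟩


lemma part2 (g : Matrix (Fin 3) (Fin 3) ℝ) : InHtheta 0 g ↔
    ∃ c s : ℝ, c ^ 2 + s ^ 2 = 1 ∧ g = !![1, 0, 0; 0, c, -s; 0, s, c] := by
  rw [key]
  constructor
  · rintro ⟨hg, c1, c2, c3, c4, c5, c6, c7⟩
    rw [Real.cos_zero, Real.sin_zero] at c1 c2 c3 c4 c5 c6 c7
    have h01 : g 0 1 = 0 := by linarith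
    have h02 : g 0 2 = 0 := by linarith
    have h10 : g 1 0 = 0 := by linarith
    have h20 : g 2 0 = 0 := by linarith
    have h5 : g 1 2 + g 2 1 = 0 := by linear_combination c5
    have h6 : g 1 1 = g 2 2 := by linear_combination c6
    have r11 := congrFun (congrFun hg.1 1) 1
    have r00 := congrFun (congrFun hg.1 0) 0
    simp [Matrix.mul_apply, Fin.sum_univ_three, Matrix.transpose_apply, Matrix.one_apply]
      at r11 r00
    have hdet := hg.2
    rw [Matrix.det_fin_three] at hdet
    have hA : g 1 1 * g 1 1 + g 1 2 * g 1 2 = 1 := by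
      linear_combination r11 - g 1 0 * h10
    have hg00 : g 0 0 = 1 := by
      linear_combination hdet - g 0 0 * hA + g 0 0 * g 1 1 * h6 + g 0 0 * g 1 2 * h5 +
        (g 1 0 * g 2 2 - g 1 2 * g 2 0) * h01 + (g 1 1 * g 2 0 - g 1 0 * g 2 1) * h02
    refine ⟨g 1 1, g 2 1, by linear_combination hA + (g 2 1 - g 1 2) * h5, ?_⟩
    ext i j
    fin_cases i <;> fin_cases j <;> simp [Matrix.vecHead, Matrix.vecTail] <;> linarith
  · rintro ⟨c, s, hcs, rfl⟩
    refine ⟨⟨?_, ?_⟩, ?_, ?_, ?_, ?_, ?_, ?_, ?_⟩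
    · ext i j
      fin_cases i <;> fin_cases j <;>
        simp [Matrix.mul_apply, Fin.sum_univ_three, Matrix.transpose_apply, Matrix.one_apply,
          Matrix.vecHead, Matrix.vecTail] <;>
        nlinarith [hcs]
    · rw [Matrix.det_fin_three]
      simp
      linear_combination hcs
    all_goals norm_num [Real.cos_zero, Real.sin_zero, Matrix.cons_val_two, Matrix.vecHead, Matrix.vecTail]


lemma part1 : ∀ θ ∈ Set.Ioo 0 (Real.pi / 4), ∀ g,
    InHtheta θ g ↔ (g = 1 ∨ g = !![1, 0, 0; 0, -1, 0; 0, 0, -1]) := by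
  rintro θ ⟨hθ1, hθ2⟩ g
  have hπ := Real.pi_pos
  have hc : 0 < Real.cos θ := Real.cos_pos_of_mem_Ioo ⟨by linarith, by linarith⟩
  have hs : 0 < Real.sin θ := Real.sin_pos_of_pos_of_lt_pi hθ1 (by linarith)
  have hC : 0 < Real.cos θ^2 - Real.sin θ^2 := by
    have h2m := Real.cos_two_mul θ
    have hpos2 : 0 < Real.cos (2*θ) := Real.cos_pos_of_mem_Ioo ⟨by linarith, by linarith⟩
    have hps := Real.sin_sq_add_cos_sq θ
    nlinarith
  rw [key]
  constructor
  · rintro ⟨hg, c1, c2, c3, c4, c5, c6, c7⟩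
    have h01 : g 0 1 = 0 := by
      rcases mul_eq_zero.mp (show g 0 1 * (Real.cos θ^2 - Real.sin θ^2) = 0 by
        linear_combination Real.cos θ * c1 - Real.sin θ * c2) with h | h
      · exact h
      · linarith
    have h02 : g 0 2 = 0 := by
      rcases mul_eq_zero.mp (show g 0 2 * Real.cos θ = 0 by
        linear_combination c2 - Real.sin θ * h01) with h | h
      · exact h
      · linarith
    have h10 : g 1 0 = 0 := by
      rcases mul_eq_zero.mp (show g 1 0 * (Real.cos θ^2 - Real.sin θ^2) = 0 by
        linear_combination Real.cos θ * c3 - Real.sin θ * c4) with h | h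
      · exact h
      · linarith
    have h20 : g 2 0 = 0 := by
      rcases mul_eq_zero.mp (show g 2 0 * Real.cos θ = 0 by
        linear_combination c4 - Real.sin θ * h10) with h | h
      · exact h
      · linarith
    have h6 : g 1 1 = g 2 2 := by linarith
    have hB : g 2 1 = g 1 2 := by
      rcases mul_eq_zero.mp (show (g 2 1 - g 1 2) * (2 * Real.sin θ * Real.cos θ) = 0 by
        linarith) with h | h
      · linarith
      · nlinarith
    have h5 : g 1 2 + g 2 1 = 0 := by
      rcases mul_eq_zero.mp c5 with h | h
      · exact h
      · linarith
    have h12 : g 1 2 = 0 := by linarith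
    have h21 : g 2 1 = 0 := by linarith
    have r11 := congrFun (congrFun hg.1 1) 1
    have r00 := congrFun (congrFun hg.1 0) 0
    simp [Matrix.mul_apply, Fin.sum_univ_three, Matrix.transpose_apply, Matrix.one_apply]
      at r11 r00
    have hdet := hg.2
    rw [Matrix.det_fin_three] at hdet
    have hA : g 1 1 * g 1 1 = 1 := by
      linear_combination r11 - g 1 0 * h10 - g 1 2 * h12
    have hg00 : g 0 0 = 1 := by
      linear_combination hdet - g 0 0 * hA + g 0 0 * g 1 1 * h6 + g 0 0 * g 1 2 * h5 +
        (g 1 0 * g 2 2 - g 1 2 * g 2 0) * h01 + (g 1 1 * g 2 0 - g 1 0 * g 2 1) * h02 -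
        g 0 0 * g 1 2 * h12
    rcases mul_eq_zero.mp (show (g 1 1 - 1) * (g 1 1 + 1) = 0 by linear_combination hA) with h | h
    · left
      ext i j
      fin_cases i <;> fin_cases j <;>
        simp [Matrix.one_apply, Matrix.vecHead, Matrix.vecTail] <;> linarith
    · right
      ext i j
      fin_cases i <;> fin_cases j <;>
        simp [Matrix.vecHead, Matrix.vecTail] <;> linarith
  · rintro (rfl | rfl)
    · refine ⟨⟨by simp, by simp⟩, ?_, ?_, ?_, ?_, ?_, ?_, ?_⟩ <;>
        norm_num [Matrix.one_fin_three, Matrix.cons_val_two, Matrix.vecHead, Matrix.vecTail]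
    · refine ⟨⟨?_, ?_⟩, ?_, ?_, ?_, ?_, ?_, ?_, ?_⟩
      · ext i j
        fin_cases i <;> fin_cases j <;>
          norm_num [Matrix.mul_apply, Fin.sum_univ_three, Matrix.transpose_apply,
            Matrix.cons_val_two, Matrix.vecHead, Matrix.vecTail, Matrix.one_apply, Fin.ext_iff]
      · rw [Matrix.det_fin_three]; norm_num [Matrix.cons_val_two, Matrix.vecHead, Matrix.vecTail]
      all_goals norm_num [Matrix.cons_val_two, Matrix.vecHead, Matrix.vecTail]

lemma part3 : ∀ g, InHtheta (Real.pi / 4) g ↔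
    (IsSO3 g ∧ (g.mulVec ![0, 1, 1] = ![0, 1, 1] ∨ g.mulVec ![0, 1, 1] = -![0, 1, 1])) := by
  intro g
  have h2 : Real.sqrt 2 ^ 2 = 2 := Real.sq_sqrt (by norm_num)
  have hpos : (0:ℝ) < Real.sqrt 2 := Real.sqrt_pos.mpr (by norm_num)
  rw [key, Real.cos_pi_div_four, Real.sin_pi_div_four]
  constructor
  · rintro ⟨hg, c1, c2, c3, c4, c5, c6, c7⟩
    have e0 : g 0 1 + g 0 2 = 0 := by
      rcases mul_eq_zero.mp (show (g 0 1 + g 0 2) * (Real.sqrt 2/2) = 0 by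
        linear_combination c1) with h | h
      · exact h
      · linarith
    have e3 : g 1 0 + g 2 0 = 0 := by
      rcases mul_eq_zero.mp (show (g 1 0 + g 2 0) * (Real.sqrt 2/2) = 0 by
        linear_combination c3) with h | h
      · exact h
      · linarith
    have e6 : g 1 1 - g 2 2 - (g 2 1 - g 1 2) = 0 := by
      linear_combination c6 + ((g 2 1 - g 1 2)/2) * h2
    have e7 : g 2 2 - g 1 1 - (g 2 1 - g 1 2) = 0 := by
      linear_combination c7 + ((g 2 1 - g 1 2)/2) * h2
    have hq : g 2 1 = g 1 2 := by linarith
    have hr : g 2 2 = g 1 1 := by linarith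
    refine ⟨hg, ?_⟩
    have r11 := congrFun (congrFun hg.1 1) 1
    have r22 := congrFun (congrFun hg.1 2) 2
    have r12 := congrFun (congrFun hg.1 1) 2
    simp [Matrix.mul_apply, Fin.sum_univ_three, Matrix.transpose_apply, Matrix.one_apply]
      at r11 r22 r12
    have ht : (g 1 1 + g 1 2)^2 = 1 := by
      linear_combination r11 + r12 - g 1 0 * e3 - g 1 1 * hq - g 1 2 * hr
    rcases mul_eq_zero.mp (show ((g 1 1 + g 1 2) - 1) * ((g 1 1 + g 1 2) + 1) = 0 by
      linear_combination ht) with h | h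
    · left
      funext i
      fin_cases i <;>
        simp [Matrix.mulVec, dotProduct, Fin.sum_univ_three,
          Matrix.vecHead, Matrix.vecTail] <;> linarith
    · right
      funext i
      fin_cases i <;>
        simp [Matrix.mulVec, dotProduct, Fin.sum_univ_three,
          Matrix.vecHead, Matrix.vecTail] <;> linarith
  · rintro ⟨hg, hv⟩
    have hgt : gᵀ * g = 1 := mul_eq_one_comm.mp hg.1
    have hvt : gᵀ.mulVec (g.mulVec ![0,1,1]) = ![(0:ℝ),1,1] := by
      rw [Matrix.mulVec_mulVec, hgt, Matrix.one_mulVec]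
    rcases hv with hv | hv <;> rw [hv] at hvt
    · have a0 := congrFun hv 0
      have a1 := congrFun hv 1
      have a2 := congrFun hv 2
      have b0 := congrFun hvt 0
      have b1 := congrFun hvt 1
      have b2 := congrFun hvt 2
      simp [Matrix.mulVec, dotProduct, Fin.sum_univ_three, Matrix.transpose_apply,
        Matrix.vecHead, Matrix.vecTail] at a0 a1 a2 b0 b1 b2
      have hq : g 2 1 - g 1 2 = 0 := by linarith
      have hr : g 1 1 - g 2 2 = 0 := by linarith
      refine ⟨hg, ?_, ?_, ?_, ?_, ?_, ?_, ?_⟩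
      · linear_combination (Real.sqrt 2/2) * a0
      · linear_combination (Real.sqrt 2/2) * a0
      · linear_combination (Real.sqrt 2/2) * b0
      · linear_combination (Real.sqrt 2/2) * b0
      · ring
      · linear_combination hr - (2*(Real.sqrt 2/2)*(Real.sqrt 2/2))*hq
      · linear_combination -hr - (2*(Real.sqrt 2/2)*(Real.sqrt 2/2))*hq
    · have a0 := congrFun hv 0
      have a1 := congrFun hv 1
      have a2 := congrFun hv 2
      have b0 := congrFun hvt 0
      have b1 := congrFun hvt 1
      have b2 := congrFun hvt 2
      simp [Matrix.mulVec, dotProduct, Fin.sum_univ_three, Matrix.transpose_apply,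
        Matrix.vecHead, Matrix.vecTail] at a0 a1 a2 b0 b1 b2
      have hq : g 2 1 - g 1 2 = 0 := by linarith
      have hr : g 1 1 - g 2 2 = 0 := by linarith
      refine ⟨hg, ?_, ?_, ?_, ?_, ?_, ?_, ?_⟩
      · linear_combination (Real.sqrt 2/2) * a0
      · linear_combination (Real.sqrt 2/2) * a0
      · linear_combination -(Real.sqrt 2/2) * b0
      · linear_combination -(Real.sqrt 2/2) * b0
      · ring
      · linear_combination hr - (2*(Real.sqrt 2/2)*(Real.sqrt 2/2))*hq
      · linear_combination -hr - (2*(Real.sqrt 2/2)*(Real.sqrt 2/2))*hq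

/-- the stabiliser `H_θ` is:
* for `θ ∈ (0, π/4)`, the two-element group `{1, diag(1,−1,−1)} ≅ ℤ/2`;
* for `θ = 0`, the group `SO(2)` of rotations in the plane of the last two coordinates;
* for `θ = π/4`, the group `≅ O(2)` of special orthogonal matrices preserving the line
  spanned by `(0,1,1)` (i.e. mapping `(0,1,1)` to `±(0,1,1)`). -/
theorem stmt_6 :
    (∀ θ ∈ Set.Ioo 0 (Real.pi / 4), ∀ g,
        InHtheta θ g ↔ (g = 1 ∨ g = !![1, 0, 0; 0, -1, 0; 0, 0, -1])) ∧
    (∀ g, InHtheta 0 g ↔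
        ∃ c s : ℝ, c ^ 2 + s ^ 2 = 1 ∧ g = !![1, 0, 0; 0, c, -s; 0, s, c]) ∧
    (∀ g, InHtheta (Real.pi / 4) g ↔
        (IsSO3 g ∧ (g.mulVec ![0, 1, 1] = ![0, 1, 1] ∨ g.mulVec ![0, 1, 1] = -![0, 1, 1]))) :=
  ⟨part1, part2, part3⟩
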